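/- Let (V, ν) be a Šerstnev PN-space with triangle function τ_M, and define ‖x‖_w = (ν_x)^(w) = sup{t | ν_x(t) < w} for w ∈ (0,1). Then: (i) ‖x‖_w ≥ 0 and ‖x‖_w = 0 for all w iff x = 0; (ii) ‖αx‖_w = |α|·‖x‖_w for all scalars α; (iii) ‖x+y‖_w ≤ ‖x‖_w + ‖y‖_w. In particular, for each fixed w ∈ (0,1), ‖·‖_w is a seminorm on V, and the family is separating. -/

import Mathlib

open Filter Topology Set Pointwise

noncomputable section

/-- A distance distribution function: nondecreasing, with values in `[0,1]`,
left-continuous, `F 0 = 0` and `sup F = 1`. -/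
def IsDDF (F : ℝ → ℝ) : Prop :=
  Monotone F ∧ (∀ t, F t ∈ Set.Icc (0:ℝ) 1) ∧
  (∀ t : ℝ, Tendsto F (nhdsWithin t (Set.Iio t)) (nhds (F t))) ∧
  F 0 = 0 ∧ (⨆ t, F t) = 1

/-- A proper d.f.: `F t → 1` as `t → ∞`. -/
def IsProper (F : ℝ → ℝ) : Prop := Tendsto F atTop (nhds 1)

/-- The unit step function at `0`. -/
def H0 : ℝ → ℝ := fun t => if 0 < t then 1 else 0

/-- The quantile function `F̂(w) = sup {t | F t < w}`, valued in `EReal`. -/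
noncomputable def qhat (F : ℝ → ℝ) (w : ℝ) : EReal :=
  sSup ((fun t : ℝ => (t : EReal)) '' {t | F t < w})

/-- The triangle function `τ_M(F,G)(x) = sup_{s+t=x} min (F s) (G t)`. -/
noncomputable def tauM (F G : ℝ → ℝ) : ℝ → ℝ :=
  fun x => ⨆ s : ℝ, min (F s) (G (x - s))

/-- A Šerstnev probabilistic normed space under `τ_M`, with all `ν_x` proper. -/
structure SPN (V : Type*) [AddCommGroup V] [Module ℝ V] where
  nu : V → ℝ → ℝ
  ddf : ∀ x, IsDDF (nu x)
  proper : ∀ x, IsProper (nu x)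
  nu_eq_iff : ∀ x, nu x = H0 ↔ x = 0
  nu_add : ∀ x y t, tauM (nu x) (nu y) t ≤ nu (x + y) t
  nu_smul : ∀ a : ℝ, a ≠ 0 → ∀ x t, nu (a • x) t = nu x (t / |a|)

/-- The quantile seminorm `‖x‖_w = sup {t | ν_x t < w}`. -/
noncomputable def pnorm {V : Type*} [AddCommGroup V] [Module ℝ V]
    (S : SPN V) (x : V) (w : ℝ) : ℝ :=
  sSup {t | S.nu x t < w}

/-- The strong topology of a PN-space, generated by the balls of the seminorms `‖·‖_w`. -/
def strongTop {V : Type*} [AddCommGroup V] [Module ℝ V] (S : SPN V) : TopologicalSpace V :=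
  TopologicalSpace.generateFrom
    {U | ∃ (x : V) (w r : ℝ), w ∈ Set.Ioo (0:ℝ) 1 ∧ 0 < r ∧
      U = {y | pnorm S (y - x) w < r}}

/-- A strong Cauchy sequence. -/
def StrongCauchy {V : Type*} [AddCommGroup V] [Module ℝ V] (S : SPN V) (x : ℕ → V) : Prop :=
  ∀ t : ℝ, 0 < t → ∃ N, ∀ m ≥ N, ∀ n ≥ N, 1 - t < S.nu (x n - x m) t

/-- Strong convergence of a sequence to a point. -/
def StrongLim {V : Type*} [AddCommGroup V] [Module ℝ V] (S : SPN V) (x : ℕ → V) (p : V) : Prop :=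
  ∀ t : ℝ, 0 < t → ∃ N, ∀ n ≥ N, 1 - t < S.nu (x n - p) t

/-- Strong completeness: every strong Cauchy sequence strongly converges. -/
def StrongComplete {V : Type*} [AddCommGroup V] [Module ℝ V] (S : SPN V) : Prop :=
  ∀ x : ℕ → V, StrongCauchy S x → ∃ p, StrongLim S x p


section Aux

variable {V : Type*} [AddCommGroup V] [Module ℝ V] (S : SPN V)

lemma SPN.nu_nonpos (x : V) {t : ℝ} (ht : t ≤ 0) : S.nu x t = 0 := by
  obtain ⟨mono, icc, _, h0, _⟩ := S.ddf x
  have h1 : S.nu x t ≤ S.nu x 0 := mono ht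
  have h2 := (icc t).1
  rw [h0] at h1
  linarith

lemma SPN.zero_mem_set (x : V) {w : ℝ} (hw : 0 < w) : (0:ℝ) ∈ {t | S.nu x t < w} := by
  simpa [S.nu_nonpos x le_rfl] using hw

lemma SPN.bddAbove_set (x : V) {w : ℝ} (hw : w < 1) : BddAbove {t | S.nu x t < w} := by
  have hp : ∀ᶠ t in Filter.atTop, w < S.nu x t :=
    (S.proper x).eventually (eventually_gt_nhds hw)
  obtain ⟨T, hT⟩ := hp.exists_forall_of_atTop
  refine ⟨T, fun t ht => ?_⟩
  by_contra h
  exact absurd (hT t (le_of_not_ge h)) (not_lt.2 (le_of_lt ht))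

lemma SPN.ge_of_gt_pnorm (x : V) {w t : ℝ} (hw0 : 0 < w) (hw1 : w < 1)
    (ht : pnorm S x w < t) : w ≤ S.nu x t := by
  by_contra h
  have : t ≤ pnorm S x w :=
    le_csSup (S.bddAbove_set x hw1) (by exact not_le.1 h)
  linarith

lemma SPN.pnorm_nonneg (x : V) {w : ℝ} (hw : 0 < w) (hw1 : w < 1) :
    0 ≤ pnorm S x w :=
  le_csSup (S.bddAbove_set x hw1) (S.zero_mem_set x hw)

end Aux

/-- Theorem 3.5: the quantile seminorms of a Šerstnev PN-space are nonnegative,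
separating (vanishing for all `w` iff `x = 0`), absolutely homogeneous and
subadditive; in particular each `‖·‖_w` is a seminorm. -/
theorem pnorm_seminorm_properties {V : Type*} [AddCommGroup V] [Module ℝ V] (S : SPN V) :
    (∀ x : V, ∀ w ∈ Set.Ioo (0:ℝ) 1, 0 ≤ pnorm S x w) ∧
    (∀ x : V, (∀ w ∈ Set.Ioo (0:ℝ) 1, pnorm S x w = 0) ↔ x = 0) ∧
    (∀ (a : ℝ) (x : V), ∀ w ∈ Set.Ioo (0:ℝ) 1, pnorm S (a • x) w = |a| * pnorm S x w) ∧
    (∀ x y : V, ∀ w ∈ Set.Ioo (0:ℝ) 1,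
      pnorm S (x + y) w ≤ pnorm S x w + pnorm S y w) := by
  refine ⟨?_, ?_, ?_, ?_⟩
  · intro x w hw
    exact S.pnorm_nonneg x hw.1 hw.2
  · intro x
    constructor
    · intro h
      rw [← S.nu_eq_iff]
      funext t
      rcases le_or_gt t 0 with ht | ht
      · simp [S.nu_nonpos x ht, H0, not_lt.2 ht]
      · -- t > 0 : show nu x t = 1
        obtain ⟨mono, icc, _, _, _⟩ := S.ddf x
        have h1 : S.nu x t = 1 := by
          by_contra hne
          have hlt : S.nu x t < 1 := lt_of_le_of_ne ((icc t).2) hne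
          set w := (S.nu x t + 1) / 2 with hwdef
          have hw0 : 0 < w := by have := (icc t).1; rw [hwdef]; linarith
          have hw1 : w < 1 := by rw [hwdef]; linarith
          have hmem : t ∈ {s | S.nu x s < w} := by
            simp only [Set.mem_setOf_eq, hwdef]; linarith
          have : t ≤ pnorm S x w := le_csSup (S.bddAbove_set x hw1) hmem
          rw [h w ⟨hw0, hw1⟩] at this
          linarith
        simp [H0, ht, h1]
    · intro h w hw
      subst h
      have h0 : S.nu 0 = H0 := (S.nu_eq_iff 0).2 rfl
      have hset : {t | S.nu (0:V) t < w} = Set.Iic 0 := by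
        ext t
        simp only [Set.mem_setOf_eq, h0, H0, Set.mem_Iic]
        rcases lt_or_ge 0 t with ht | ht
        · simp [ht, not_lt.2 (le_of_lt ht), not_lt.2 hw.2.le]
        · simp [not_lt.2 ht, hw.1, ht]
      rw [pnorm, hset, csSup_Iic]
  · intro a x w hw
    rcases eq_or_ne a 0 with rfl | ha
    · have h0 : pnorm S (0:V) w = 0 := by
        have h0 : S.nu 0 = H0 := (S.nu_eq_iff 0).2 rfl
        have hset : {t | S.nu (0:V) t < w} = Set.Iic 0 := by
          ext t
          simp only [Set.mem_setOf_eq, h0, H0, Set.mem_Iic]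
          rcases lt_or_ge 0 t with ht | ht
          · simp [ht, not_lt.2 (le_of_lt ht), not_lt.2 hw.2.le]
          · simp [not_lt.2 ht, hw.1, ht]
        rw [pnorm, hset, csSup_Iic]
      simp [h0]
    · have hab : (0:ℝ) < |a| := abs_pos.2 ha
      have hset : {t | S.nu (a • x) t < w} = |a| • {s | S.nu x s < w} := by
        ext t
        simp only [Set.mem_setOf_eq, S.nu_smul a ha x t]
        constructor
        · intro h
          exact ⟨t / |a|, h, by simp only [smul_eq_mul]; field_simp⟩
        · rintro ⟨s, hs, rfl⟩
          simpa [smul_eq_mul, mul_div_assoc, mul_div_cancel_left₀ _ hab.ne'] using hs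
      rw [pnorm, hset, Real.sSup_smul_of_nonneg (le_of_lt hab), pnorm, smul_eq_mul]
  · intro x y w hw
    obtain ⟨hw0, hw1⟩ := hw
    set A := pnorm S x w
    set B := pnorm S y w
    refine csSup_le ⟨0, S.zero_mem_set (x+y) hw0⟩ (fun t ht => ?_)
    by_contra hgt
    push_neg at hgt
    set s := A + (t - (A + B)) / 2 with hs
    have hsA : A < s := by rw [hs]; linarith
    have htsB : B < t - s := by rw [hs]; linarith
    have h1 : w ≤ S.nu x s := S.ge_of_gt_pnorm x hw0 hw1 hsA
    have h2 : w ≤ S.nu y (t - s) := S.ge_of_gt_pnorm y hw0 hw1 htsB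
    have hbdd : BddAbove (Set.range fun s => min (S.nu x s) (S.nu y (t - s))) := by
      refine ⟨1, ?_⟩
      rintro _ ⟨u, rfl⟩
      exact le_trans (min_le_left _ _) ((S.ddf x).2.1 u).2
    have h3 : w ≤ tauM (S.nu x) (S.nu y) t :=
      le_trans (le_min h1 h2) (le_ciSup hbdd s)
    have h4 := S.nu_add x y t
    have : w ≤ S.nu (x + y) t := le_trans h3 h4
    exact absurd ht (not_lt.2 this)
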